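/- arXiv:1211.6069 — 2 statements merged into one kernel-verified Lean document; each statement's English description precedes it below -/
import Mathlib

section
/- Let m be a finite measure on the torus ℝ/ℤ and φ a Schwartz function on ℝ. Define the measure m′ on ℝ by dm′(x) = φ(x) dm({x}), where {x} denotes the fractional part. Then for all ξ ∈ ℝ, m̂′(ξ) = Σ_{k∈ℤ} m̂(k) φ̂(ξ − k). -/
open MeasureTheory Real
open scoped FourierTransform

private lemma aux_ineq (a c : ℝ) : 1 + |a| ≤ (1 + |c|) * (1 + |a + c|) := by
  have h : |a| ≤ |a + c| + |c| := by
    have := abs_add_le (a + c) (-c); simpa using this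
  nlinarith [abs_nonneg a, abs_nonneg c, abs_nonneg (a + c)]

private lemma aux_inv_sq (a c : ℝ) :
    ((1 + |a + c|) ^ 2)⁻¹ ≤ (1 + |c|) ^ 2 * ((1 + |a|) ^ 2)⁻¹ := by
  have h := aux_ineq a c
  rw [inv_eq_one_div, ← div_eq_mul_inv,
    div_le_div_iff₀ (by positivity) (by positivity)]
  nlinarith [abs_nonneg a, abs_nonneg c, abs_nonneg (a + c)]

private lemma aux_decay (ψ : SchwartzMap ℝ ℂ) :
    ∃ C : ℝ, 0 ≤ C ∧ ∀ x : ℝ, ‖ψ x‖ ≤ C * ((1 + |x|) ^ 2)⁻¹ := by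
  refine ⟨2 ^ 2 * (Finset.Iic ((2 : ℕ), (0 : ℕ))).sup
      (fun m => SchwartzMap.seminorm ℝ m.1 m.2) ψ, by positivity, fun x => ?_⟩
  have h := SchwartzMap.one_add_le_sup_seminorm_apply (𝕜 := ℝ) (m := (2, 0))
    le_rfl le_rfl ψ x
  rw [norm_iteratedFDeriv_zero] at h
  have hx : (0 : ℝ) < (1 + |x|) ^ 2 := by positivity
  rw [← div_eq_mul_inv, le_div_iff₀ hx]
  calc ‖ψ x‖ * (1 + |x|) ^ 2 = (1 + ‖x‖) ^ 2 * ‖ψ x‖ := by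
        rw [Real.norm_eq_abs]; ring
    _ ≤ _ := h

private lemma aux_summable : Summable (fun n : ℤ => ((1 + |(n : ℝ)|) ^ 2)⁻¹) := by
  refine Summable.of_norm_bounded_eventually (g := fun n : ℤ => 1 / (n : ℝ) ^ 2)
    (Real.summable_one_div_int_pow.mpr one_lt_two) ?_
  have : {n : ℤ | ¬ ‖((1 + |(n : ℝ)|) ^ 2)⁻¹‖ ≤ 1 / (n : ℝ) ^ 2} ⊆ {0} := by
    intro n hn
    simp only [Set.mem_setOf_eq, not_le] at hn
    by_contra h0
    have hn0 : (n : ℝ) ≠ 0 := Int.cast_ne_zero.mpr h0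
    have h1 : ‖((1 + |(n : ℝ)|) ^ 2)⁻¹‖ = ((1 + |(n : ℝ)|) ^ 2)⁻¹ := by
      rw [Real.norm_eq_abs, abs_of_nonneg]; positivity
    rw [h1, one_div] at hn
    have h2 : ((1 + |(n : ℝ)|) ^ 2)⁻¹ ≤ ((n : ℝ) ^ 2)⁻¹ := by
      apply inv_anti₀ (by positivity)
      nlinarith [abs_nonneg ((n : ℝ)), sq_abs ((n : ℝ))]
    exact absurd hn (not_lt.mpr h2)
  exact (Set.finite_singleton 0).subset this

private lemma aux_tsum_lint (m₀ : Measure ℝ) [IsFiniteMeasure m₀] {F : ℤ → ℝ → ℂ} {C : ℝ}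
    (hC : 0 ≤ C)
    (hbF : ∀ n : ℤ, ∀ᵐ y ∂m₀, ‖F n y‖ ≤ C * ((1 + |(n : ℝ)|) ^ 2)⁻¹) :
    ∑' n : ℤ, ∫⁻ y, ‖F n y‖₊ ∂m₀ ≠ ⊤ := by
  have h1 : ∀ n : ℤ, ∫⁻ y, ‖F n y‖₊ ∂m₀
      ≤ ENNReal.ofReal (C * ((1 + |(n : ℝ)|) ^ 2)⁻¹) * m₀ Set.univ := by
    intro n
    calc ∫⁻ y, ‖F n y‖₊ ∂m₀
        ≤ ∫⁻ _, ENNReal.ofReal (C * ((1 + |(n : ℝ)|) ^ 2)⁻¹) ∂m₀ := by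
          refine lintegral_mono_ae ((hbF n).mono fun y hy => ?_)
          rw [← ENNReal.ofReal_coe_nnreal, coe_nnnorm]
          exact ENNReal.ofReal_le_ofReal hy
      _ = _ := lintegral_const _
  refine ne_top_of_le_ne_top ?_ (ENNReal.tsum_le_tsum h1)
  rw [ENNReal.tsum_mul_right, ← ENNReal.ofReal_tsum_of_nonneg
    (fun n => by positivity) (aux_summable.mul_left C)]
  exact ENNReal.mul_ne_top ENNReal.ofReal_ne_top (measure_ne_top m₀ _)

/-- Lifting lemma (Lemma 9.A.4 of Wolff, first half). If m is a finite
measure on the circle, realized as a measure m₀ on [0,1) ⊂ ℝ, mper is its periodization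
to ℝ, and φ is Schwartz, then the Fourier transform of dm′(x) = φ(x) dm({x}) satisfies
`m̂′(ξ) = Σ_{k∈ℤ} m̂(k) φ̂(ξ-k)`. -/
theorem stmt_6 (m₀ : Measure ℝ) [IsFiniteMeasure m₀]
    (hsupp : m₀ (Set.Ico (0 : ℝ) 1)ᶜ = 0)
    (mper : Measure ℝ)
    (hper : mper = Measure.sum (fun n : ℤ => Measure.map (fun y => y + (n : ℝ)) m₀))
    (φ : SchwartzMap ℝ ℂ) :
    ∀ ξ : ℝ,
      ∫ x, Complex.exp (-(2 * (π : ℂ) * Complex.I * (x : ℂ) * (ξ : ℂ))) * φ x ∂mper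
        = ∑' k : ℤ,
            (∫ x, Complex.exp (-(2 * (π : ℂ) * Complex.I * (k : ℂ) * (x : ℂ))) ∂m₀) *
              VectorFourier.fourierIntegral Real.fourierChar volume (innerₗ ℝ) (fun x => φ x) (ξ - k) := by
  intro ξ
  set f : ℝ → ℂ :=
    fun x => Complex.exp (-(2 * (π : ℂ) * Complex.I * (x : ℂ) * (ξ : ℂ))) * φ x with hf_def
  have hfc : ∀ x : ℝ, f x = Complex.exp ((-(2 * π * x * ξ) : ℝ) * Complex.I) * φ x := by
    intro x; simp only [hf_def]; congr 2; push_cast; ring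
  have hf_cont : Continuous f := by
    apply Continuous.mul _ φ.continuous
    exact Complex.continuous_exp.comp (by continuity)
  have hnorm : ∀ x : ℝ, ‖f x‖ = ‖φ x‖ := by
    intro x
    rw [hfc x, norm_mul,
      Complex.norm_exp_ofReal_mul_I, one_mul]
  -- Fourier transform of f is a translate of that of φ
  have h𝓕f : ∀ t : ℝ, 𝓕 f t
      = 𝓕 (fun x => φ x) (t + ξ) := by
    intro t
    rw [Real.fourier_real_eq_integral_exp_smul,
      Real.fourier_real_eq_integral_exp_smul]
    apply integral_congr_ae
    filter_upwards with x
    rw [hfc x, smul_eq_mul, smul_eq_mul, ← mul_assoc, ← Complex.exp_add]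
    congr 2
    push_cast; ring
  -- decay estimates
  obtain ⟨C, hC0, hC⟩ := aux_decay φ
  obtain ⟨D, hD0, hD⟩ := aux_decay (SchwartzMap.fourierTransformCLM ℝ φ)
  have hψ : ∀ u : ℝ, ‖𝓕 (fun x => φ x) u‖ ≤ D * ((1 + |u|) ^ 2)⁻¹ := by
    intro u
    have := hD u
    exact this
  -- big-O assumptions for Poisson summation
  have hf_bigO : f =O[Filter.cocompact ℝ] (fun x : ℝ => |x| ^ (-(2:ℝ))) := by
    refine (Asymptotics.isBigO_of_le _ fun x => ?_).trans (φ.isBigO_cocompact_rpow (-2))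
    rw [hnorm x]
  have hcc : ∀ᶠ t in Filter.cocompact ℝ, (1 : ℝ) ≤ |t| := by
    rw [cocompact_eq_atBot_atTop]
    refine Filter.eventually_sup.mpr ⟨?_, ?_⟩
    · filter_upwards [Filter.eventually_le_atBot (-1 : ℝ)] with t ht
      rw [abs_of_nonpos (by linarith)]; linarith
    · filter_upwards [Filter.eventually_ge_atTop (1 : ℝ)] with t ht
      rw [abs_of_nonneg (by linarith)]; linarith
  have h𝓕_bigO : (𝓕 f) =O[Filter.cocompact ℝ]
      (fun x : ℝ => |x| ^ (-(2:ℝ))) := by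
    rw [Asymptotics.isBigO_iff]
    refine ⟨D * (1 + |ξ|) ^ 2, ?_⟩
    filter_upwards [hcc] with t ht
    have h1 : ‖𝓕 f t‖ ≤ D * (1 + |ξ|) ^ 2 * ((1 + |t|) ^ 2)⁻¹ := by
      rw [h𝓕f t]
      calc ‖𝓕 (fun x => φ x) (t + ξ)‖
          ≤ D * ((1 + |t + ξ|) ^ 2)⁻¹ := hψ _
        _ ≤ D * ((1 + |ξ|) ^ 2 * ((1 + |t|) ^ 2)⁻¹) := by
            exact mul_le_mul_of_nonneg_left (aux_inv_sq t ξ) hD0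
        _ = D * (1 + |ξ|) ^ 2 * ((1 + |t|) ^ 2)⁻¹ := by ring
    have h2 : ((1 + |t|) ^ 2)⁻¹ ≤ |t| ^ (-(2:ℝ)) := by
      rw [show (-(2:ℝ)) = -((2:ℕ):ℝ) by norm_num, Real.rpow_neg (abs_nonneg t),
        Real.rpow_natCast]
      exact inv_anti₀ (by nlinarith) (by nlinarith [abs_nonneg t])
    have h3 : ‖|t| ^ (-(2:ℝ))‖ = |t| ^ (-(2:ℝ)) := by
      rw [Real.norm_eq_abs, abs_of_nonneg (Real.rpow_nonneg (abs_nonneg t) _)]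
    rw [h3]
    calc ‖𝓕 f t‖ ≤ D * (1 + |ξ|) ^ 2 * ((1 + |t|) ^ 2)⁻¹ := h1
      _ ≤ D * (1 + |ξ|) ^ 2 * (|t| ^ (-(2:ℝ))) := by
          exact mul_le_mul_of_nonneg_left h2 (by positivity)
  -- a.e. membership in [0,1)
  have hae : ∀ᵐ y ∂m₀, y ∈ Set.Ico (0 : ℝ) 1 := by
    rw [MeasureTheory.ae_iff]
    exact hsupp
  -- the key summability for Fubini over the periodisation
  have hbF : ∀ n : ℤ, ∀ᵐ y ∂m₀, ‖f (y + n)‖ ≤ (4 * C) * ((1 + |(n : ℝ)|) ^ 2)⁻¹ := by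
    intro n
    filter_upwards [hae] with y hy
    rw [hnorm]
    calc ‖φ (y + n)‖ ≤ C * ((1 + |(y + n : ℝ)|) ^ 2)⁻¹ := hC _
      _ ≤ C * ((1 + |y|) ^ 2 * ((1 + |(n : ℝ)|) ^ 2)⁻¹) := by
          have h := aux_inv_sq (n : ℝ) y
          rw [add_comm (n : ℝ) y] at h
          exact mul_le_mul_of_nonneg_left h hC0
      _ ≤ (4 * C) * ((1 + |(n : ℝ)|) ^ 2)⁻¹ := by
          have hy2 : (1 + |y|) ^ 2 ≤ 4 := by
            have h1 : |y| ≤ 1 := by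
              rw [abs_of_nonneg hy.1]; linarith [hy.2]
            nlinarith [h1, abs_nonneg y]
          have h5 : (0:ℝ) ≤ ((1 + |(n : ℝ)|) ^ 2)⁻¹ := by positivity
          nlinarith [mul_le_mul_of_nonneg_left (mul_le_mul_of_nonneg_right hy2 h5) hC0]
  have hsum_lint : ∑' n : ℤ, ∫⁻ y, ‖f (y + (n : ℝ))‖₊ ∂m₀ ≠ ⊤ :=
    aux_tsum_lint m₀ (by positivity) hbF
  have hFmeas : ∀ n : ℤ, AEStronglyMeasurable (fun y : ℝ => f (y + (n : ℝ))) m₀ :=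
    fun n => (hf_cont.comp (continuous_id.add continuous_const)).aestronglyMeasurable
  -- integrability over mper
  have hint : Integrable f mper := by
    refine ⟨hf_cont.aestronglyMeasurable, ?_⟩
    rw [HasFiniteIntegral, hper, lintegral_sum_measure]
    have : ∀ n : ℤ, ∫⁻ x, ‖f x‖₊ ∂(Measure.map (fun y => y + (n : ℝ)) m₀)
        = ∫⁻ y, ‖f (y + (n : ℝ))‖₊ ∂m₀ := by
      intro n
      rw [lintegral_map hf_cont.measurable.nnnorm.coe_nnreal_ennreal (measurable_add_const _)]
    exact (tsum_congr this).trans_lt hsum_lint.lt_top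
  -- summability for the second Fubini
  have hbG : ∀ k : ℤ, ∀ᵐ (y : ℝ) ∂m₀,
      ‖𝓕 f k * fourier k (y : UnitAddCircle)‖
        ≤ (D * (1 + |ξ|) ^ 2) * ((1 + |(k : ℝ)|) ^ 2)⁻¹ := by
    intro k
    filter_upwards with y
    rw [norm_mul]
    have h4 : ‖fourier k (y : UnitAddCircle)‖ = 1 := by
      rw [fourier_apply]
      exact Circle.norm_coe _
    rw [h4, mul_one, h𝓕f]
    calc ‖𝓕 (fun x => φ x) ((k : ℝ) + ξ)‖
        ≤ D * ((1 + |(k : ℝ) + ξ|) ^ 2)⁻¹ := hψ _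
      _ ≤ D * ((1 + |ξ|) ^ 2 * ((1 + |(k : ℝ)|) ^ 2)⁻¹) :=
          mul_le_mul_of_nonneg_left (aux_inv_sq (k : ℝ) ξ) hD0
      _ = (D * (1 + |ξ|) ^ 2) * ((1 + |(k : ℝ)|) ^ 2)⁻¹ := by ring
  have hsum2 : ∑' k : ℤ,
      ∫⁻ y, ‖𝓕 f k * fourier k (y : UnitAddCircle)‖₊ ∂m₀ ≠ ⊤ :=
    aux_tsum_lint m₀ (by positivity) hbG
  have hGmeas : ∀ k : ℤ, AEStronglyMeasurable
      (fun y : ℝ => 𝓕 f k * fourier k (y : UnitAddCircle)) m₀ :=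
    fun k => (continuous_const.mul ((map_continuous (fourier k)).comp
      (AddCircle.continuous_mk' (1:ℝ)))).aestronglyMeasurable
  -- now the chain of equalities
  calc ∫ x, Complex.exp (-(2 * (π : ℂ) * Complex.I * (x : ℂ) * (ξ : ℂ))) * φ x ∂mper
      = ∫ x, f x ∂mper := rfl
    _ = ∑' n : ℤ, ∫ x, f x ∂(Measure.map (fun y => y + (n : ℝ)) m₀) := by
        rw [hper] at hint ⊢
        exact integral_sum_measure hint
    _ = ∑' n : ℤ, ∫ y, f (y + (n : ℝ)) ∂m₀ := by
        refine tsum_congr fun n => ?_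
        exact integral_map (measurable_add_const _).aemeasurable
          hf_cont.aestronglyMeasurable
    _ = ∫ y, ∑' n : ℤ, f (y + (n : ℝ)) ∂m₀ :=
        (integral_tsum hFmeas hsum_lint).symm
    _ = ∫ y, ∑' k : ℤ, 𝓕 f k * fourier k (y : UnitAddCircle) ∂m₀ := by
        refine integral_congr_ae (Filter.Eventually.of_forall fun y => ?_)
        exact Real.tsum_eq_tsum_fourier_of_rpow_decay hf_cont one_lt_two
          hf_bigO h𝓕_bigO y
    _ = ∑' k : ℤ, ∫ y, 𝓕 f k * fourier k (y : UnitAddCircle) ∂m₀ :=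
        integral_tsum hGmeas hsum2
    _ = ∑' k : ℤ, 𝓕 f k * ∫ y, fourier k (y : UnitAddCircle) ∂m₀ :=
        tsum_congr fun k => integral_const_mul _ _
    _ = ∑' k : ℤ, 𝓕 f (((-k : ℤ) : ℝ))
          * ∫ y, fourier (-k) (y : UnitAddCircle) ∂m₀ := by
        have := (Equiv.neg ℤ).tsum_eq
          (fun k : ℤ => 𝓕 f k * ∫ y, fourier k (y : UnitAddCircle) ∂m₀)
        simp only [Equiv.neg_apply] at this
        exact this.symm
    _ = ∑' k : ℤ,
          (∫ x, Complex.exp (-(2 * (π : ℂ) * Complex.I * (k : ℂ) * (x : ℂ))) ∂m₀) *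
            𝓕 (fun x => φ x) (ξ - k) := by
        refine tsum_congr fun k => ?_
        have e1 : 𝓕 f (-k : ℤ)
            = 𝓕 (fun x => φ x) (ξ - k) := by
          rw [show ((-k : ℤ) : ℝ) = -(k : ℝ) by push_cast; ring, h𝓕f,
            show -(k : ℝ) + ξ = ξ - k by ring]
        have e2 : ∫ y, fourier (-k) (y : UnitAddCircle) ∂m₀
            = ∫ x, Complex.exp (-(2 * (π : ℂ) * Complex.I * (k : ℂ) * (x : ℂ))) ∂m₀ := by
          refine integral_congr_ae (Filter.Eventually.of_forall fun y => ?_)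
          simp only [fourier_coe_apply]
          congr 1
          push_cast
          ring
        rw [e1, e2, mul_comm]
end

section
/- Let m be a measure on ℝ/ℤ with |m̂(k)| ≤ C(1+|k|)^{−α} for all k ∈ ℤ and some α > 0, and let φ be a Schwartz function on ℝ. Define dm′(x) = φ(x) dm({x}). Then there is C′ > 0 with |m̂′(ξ)| ≤ C′(1+|ξ|)^{−α} for all ξ ∈ ℝ. -/
open MeasureTheory Real

lemma peetre (ξ k : ℝ) : 1 + |ξ| ≤ (1 + |k + ξ|) * (1 + |k|) := by
  have h1 : |ξ| ≤ |k + ξ| + |k| := by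
    calc |ξ| = |(k + ξ) + (-k)| := by ring_nf
    _ ≤ |k + ξ| + |(-k)| := abs_add_le _ _
    _ = |k + ξ| + |k| := by rw [abs_neg]
  nlinarith [abs_nonneg (k+ξ), abs_nonneg k, abs_nonneg ξ]

lemma peetre_rpow {a : ℝ} (ha : 0 < a) (ξ k : ℝ) :
    (1 + |k + ξ|) ^ (-a) * (1 + |k|) ^ (-a) ≤ (1 + |ξ|) ^ (-a) := by
  have h0 : (0:ℝ) < 1 + |ξ| := by positivity
  have h1 : (0:ℝ) < 1 + |k + ξ| := by positivity
  have h2 : (0:ℝ) < 1 + |k| := by positivity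
  rw [← Real.mul_rpow h1.le h2.le]
  exact Real.rpow_le_rpow_of_nonpos h0 (peetre ξ k) (neg_nonpos.mpr ha.le)

lemma schwartz_decay (ψ : SchwartzMap ℝ ℂ) (N : ℕ) :
    ∃ B : ℝ, 0 < B ∧ ∀ y : ℝ, ‖ψ y‖ ≤ B * (1 + |y|) ^ (-(N:ℝ)) := by
  obtain ⟨B, hB⟩ : ∃ B, ∀ y : ℝ, (1 + |y|) ^ N * ‖ψ y‖ ≤ B := by
    refine ⟨2 ^ N * (Finset.Iic ((N:ℕ), (0:ℕ))).sup (fun m => SchwartzMap.seminorm ℝ m.1 m.2) ψ,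
      fun y => ?_⟩
    simpa [norm_iteratedFDeriv_zero, Real.norm_eq_abs] using
      SchwartzMap.one_add_le_sup_seminorm_apply (𝕜 := ℝ) (m := (N, 0)) le_rfl le_rfl ψ y
  refine ⟨max B 1, lt_of_lt_of_le one_pos (le_max_right _ _), fun y => ?_⟩
  have h0 : (0:ℝ) < 1 + |y| := by positivity
  have h := hB y
  rw [Real.rpow_neg h0.le, Real.rpow_natCast, mul_comm, inv_mul_eq_div, le_div_iff₀ (by positivity),
    mul_comm]
  exact h.trans (le_max_left _ _)

-- base summability
lemma summable_base : Summable (fun j : ℤ => (1 + |(j:ℝ)|) ^ (-(2:ℝ))) := by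
  apply summable_of_isBigO (Real.summable_abs_int_rpow one_lt_two)
  apply Asymptotics.IsBigO.of_bound 1
  filter_upwards [Filter.mem_cofinite.2 (by rw [compl_compl]; exact Set.finite_singleton (0:ℤ))] with j hj
  have hj0 : (1:ℝ) ≤ |(j:ℝ)| := by
    have : j ≠ 0 := by simpa using hj
    exact_mod_cast Int.one_le_abs (by simpa using this)
  rw [one_mul, Real.norm_eq_abs, Real.norm_eq_abs, _root_.abs_of_nonneg (by positivity : (0:ℝ) ≤ (1 + |(j:ℝ)|) ^ (-(2:ℝ))),
    _root_.abs_of_nonneg (by positivity : (0:ℝ) ≤ |(j:ℝ)| ^ (-(2:ℝ)))]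
  exact Real.rpow_le_rpow_of_nonpos (by linarith) (by linarith) (by norm_num)

noncomputable def S₀ : ℝ := ∑' j : ℤ, (1 + |(j:ℝ)|) ^ (-(2:ℝ))

lemma S₀_pos : 0 < S₀ := by
  have h0 : (0:ℝ) < (1 + |((0:ℤ):ℝ)|) ^ (-(2:ℝ)) := by positivity
  refine lt_of_lt_of_le h0 (summable_base.le_tsum 0 fun j _ => by positivity)

lemma shift_pointwise (ξ : ℝ) (k : ℤ) :
    (1 + |(k:ℝ) + ξ|) ^ (-(2:ℝ)) ≤ 4 * (1 + |((k + round ξ : ℤ):ℝ)|) ^ (-(2:ℝ)) := by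
  set m : ℤ := k + round ξ
  have habs : |ξ - round ξ| ≤ 1/2 := abs_sub_round ξ
  have hkey : (1 + |(m:ℝ)|) / 2 ≤ 1 + |(k:ℝ) + ξ| := by
    have h1 : |(m:ℝ)| ≤ |(k:ℝ) + ξ| + |ξ - round ξ| := by
      calc |(m:ℝ)| = |((k:ℝ) + ξ) - (ξ - round ξ)| := by push_cast [m]; ring_nf
      _ ≤ |(k:ℝ) + ξ| + |ξ - round ξ| := abs_sub _ _
    linarith [abs_nonneg ((k:ℝ) + ξ)]
  have h2 : (0:ℝ) < (1 + |(m:ℝ)|) / 2 := by positivity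
  have h3 := Real.rpow_le_rpow_of_nonpos h2 hkey (by norm_num : -(2:ℝ) ≤ 0)
  calc (1 + |(k:ℝ) + ξ|) ^ (-(2:ℝ)) ≤ ((1 + |(m:ℝ)|) / 2) ^ (-(2:ℝ)) := h3
  _ = 4 * (1 + |(m:ℝ)|) ^ (-(2:ℝ)) := by
      rw [Real.div_rpow (by positivity) (by norm_num)]
      have : (2:ℝ) ^ (-(2:ℝ)) = 1/4 := by
        rw [Real.rpow_neg (by norm_num)]
        norm_num [show ((2:ℝ) ^ (2:ℝ)) = 4 by
          rw [show (2:ℝ) = ((2:ℕ):ℝ) from by norm_num, Real.rpow_natCast]; norm_num]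
      rw [this]; ring

lemma summable_shifted_base (r : ℤ) :
    Summable (fun k : ℤ => (1 + |((k + r : ℤ):ℝ)|) ^ (-(2:ℝ))) := by
  have h := ((Equiv.addRight r).summable_iff
    (f := fun j : ℤ => (1 + |(j:ℝ)|) ^ (-(2:ℝ)))).2 summable_base
  simpa [Function.comp_def] using h

lemma tsum_shifted_base (r : ℤ) :
    (∑' k : ℤ, (1 + |((k + r : ℤ):ℝ)|) ^ (-(2:ℝ))) = S₀ := by
  have h := (Equiv.addRight r).tsum_eq (fun j : ℤ => (1 + |(j:ℝ)|) ^ (-(2:ℝ)))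
  simpa [S₀] using h

lemma summable_shift (ξ : ℝ) : Summable (fun k : ℤ => (1 + |(k:ℝ) + ξ|) ^ (-(2:ℝ))) := by
  refine Summable.of_nonneg_of_le (fun k => by positivity) (shift_pointwise ξ)
    (((summable_shifted_base (round ξ)).mul_left 4))

lemma tsum_shift_le (ξ : ℝ) :
    (∑' k : ℤ, (1 + |(k:ℝ) + ξ|) ^ (-(2:ℝ))) ≤ 4 * S₀ := by
  have h1 := Summable.tsum_le_tsum (shift_pointwise ξ) (summable_shift ξ)
    ((summable_shifted_base (round ξ)).mul_left 4)
  rw [tsum_mul_left, tsum_shifted_base] at h1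
  exact h1

lemma rpow_neg_two_half {x t : ℝ} (hx : 0 < x) (h : x / 2 ≤ t) :
    t ^ (-(2:ℝ)) ≤ 4 * x ^ (-(2:ℝ)) := by
  have h2 : (0:ℝ) < x / 2 := by positivity
  calc t ^ (-(2:ℝ)) ≤ (x / 2) ^ (-(2:ℝ)) := Real.rpow_le_rpow_of_nonpos h2 h (by norm_num)
  _ = 4 * x ^ (-(2:ℝ)) := by
      rw [Real.div_rpow hx.le (by norm_num)]
      have h4 : (2:ℝ) ^ (-(2:ℝ)) = 1/4 := by
        rw [Real.rpow_neg (by norm_num)]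
        norm_num [show ((2:ℝ) ^ (2:ℝ)) = 4 by
          rw [show (2:ℝ) = ((2:ℕ):ℝ) from by norm_num, Real.rpow_natCast]; norm_num]
      rw [h4]; ring

lemma norm_fourier_one (k : ℤ) (x : AddCircle (1:ℝ)) : ‖fourier k x‖ = 1 :=
  Circle.norm_coe _

lemma norm_exp_I (r : ℝ) : ‖Complex.exp ((r:ℂ) * Complex.I)‖ = 1 := by
  rw [Complex.norm_exp]
  simp

lemma norm_g (ξ y : ℝ) (c : ℂ) : ‖Complex.exp (-(2 * (π:ℂ) * Complex.I * y * ξ)) * c‖ = ‖c‖ := by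
  rw [norm_mul]
  have : -(2 * (π:ℂ) * Complex.I * y * ξ) = ((-(2 * π * y * ξ) : ℝ) : ℂ) * Complex.I := by
    push_cast; ring
  rw [this, norm_exp_I, one_mul]

open scoped FourierTransform in
lemma fourier_modulation (φ : SchwartzMap ℝ ℂ) (ξ w : ℝ) :
    𝓕 (fun y : ℝ => Complex.exp (-(2 * (π:ℂ) * Complex.I * y * ξ)) * φ y) w
      = 𝓕 (φ : ℝ → ℂ) (w + ξ) := by
  rw [Real.fourier_real_eq_integral_exp_smul, Real.fourier_real_eq_integral_exp_smul]
  congr 1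
  ext v
  rw [smul_eq_mul, smul_eq_mul, ← mul_assoc, ← Complex.exp_add]
  congr 2
  push_cast
  ring

open scoped FourierTransform

lemma tsum_lintegral_ne_top {μ : Measure ℝ} [IsFiniteMeasure μ] {F : ℤ → ℝ → ℂ} {c : ℤ → ℝ}
    (hbound : ∀ n, ∀ᵐ y ∂μ, ‖F n y‖ ≤ c n) (hsum : Summable c) (hcnn : ∀ n, 0 ≤ c n) :
    (∑' n : ℤ, ∫⁻ y, ‖F n y‖₊ ∂μ) ≠ ⊤ := by
  have h1 : ∀ n, ∫⁻ y, (‖F n y‖₊ : ENNReal) ∂μ ≤ ENNReal.ofReal (c n) * μ Set.univ := by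
    intro n
    calc ∫⁻ y, (‖F n y‖₊ : ENNReal) ∂μ ≤ ∫⁻ _, ENNReal.ofReal (c n) ∂μ := by
          refine lintegral_mono_ae ?_
          filter_upwards [hbound n] with y hy
          rw [← ENNReal.ofReal_coe_nnreal, coe_nnnorm]
          exact ENNReal.ofReal_le_ofReal hy
    _ = ENNReal.ofReal (c n) * μ Set.univ := lintegral_const _
  refine ne_of_lt (lt_of_le_of_lt (ENNReal.tsum_le_tsum h1) ?_)
  rw [ENNReal.tsum_mul_right, ← ENNReal.ofReal_tsum_of_nonneg hcnn hsum]
  exact ENNReal.mul_lt_top ENNReal.ofReal_lt_top (measure_lt_top _ _)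

/-- Lifting lemma (Lemma 9.A.4 of Wolff, second half). If the Fourier
coefficients of m decay like `C(1+|k|)^{-α}` and φ is Schwartz, then the Fourier
transform of dm′(x) = φ(x) dm({x}) decays like `C′(1+|ξ|)^{-α}` on all of ℝ. -/
theorem stmt_7 (m₀ : Measure ℝ) [IsFiniteMeasure m₀]
    (hsupp : m₀ (Set.Ico (0 : ℝ) 1)ᶜ = 0)
    (mper : Measure ℝ)
    (hper : mper = Measure.sum (fun n : ℤ => Measure.map (fun y => y + (n : ℝ)) m₀))
    (φ : SchwartzMap ℝ ℂ) (C a : ℝ) (hC : 0 < C) (ha : 0 < a)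
    (hdecay : ∀ k : ℤ,
      ‖∫ x, Complex.exp (-(2 * (π : ℂ) * Complex.I * (k : ℂ) * (x : ℂ))) ∂m₀‖
        ≤ C * (1 + |(k : ℝ)|) ^ (-a)) :
    ∃ C' : ℝ, 0 < C' ∧ ∀ ξ : ℝ,
      ‖∫ x, Complex.exp (-(2 * (π : ℂ) * Complex.I * (x : ℂ) * (ξ : ℂ))) * φ x ∂mper‖
        ≤ C' * (1 + |ξ|) ^ (-a) := by
  classical
  set N : ℕ := ⌈a⌉₊ + 2 with hN
  obtain ⟨B, hB0, hB⟩ := schwartz_decay (SchwartzMap.fourierTransformCLM ℝ φ) N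
  obtain ⟨D, hD0, hD⟩ := schwartz_decay φ 2
  have hS₀ := S₀_pos
  refine ⟨B * C * (4 * S₀), by positivity, fun ξ => ?_⟩
  set g : ℝ → ℂ := fun x => Complex.exp (-(2 * (π : ℂ) * Complex.I * (x : ℂ) * (ξ : ℂ))) * φ x
    with hgdef
  -- basic facts
  have hgn : ∀ y : ℝ, ‖g y‖ = ‖φ y‖ := fun y => norm_g ξ y (φ y)
  have hgc : Continuous g := by
    apply Continuous.mul ?_ φ.continuous
    exact Complex.continuous_exp.comp (by fun_prop)
  have hφb : ∀ y : ℝ, ‖φ y‖ ≤ D * (1 + |y|) ^ (-(2:ℝ)) := by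
    intro y; simpa using hD y
  have hbase : ∀ y : ℝ, (1:ℝ) ≤ 1 + |y| := fun y => by
    have := abs_nonneg y; linarith
  have hFgb : ∀ w : ℝ, ‖𝓕 g w‖ ≤ B * (1 + |w + ξ|) ^ (-(N:ℝ)) := by
    intro w
    rw [hgdef, fourier_modulation φ ξ w]
    simpa [SchwartzMap.fourier_coe] using hB (w + ξ)
  have hNa : a + 2 ≤ (N:ℝ) := by
    rw [hN]; push_cast; linarith [Nat.le_ceil a]
  have hN2 : (2:ℝ) ≤ (N:ℝ) := by linarith [ha]
  have hFgb2 : ∀ w : ℝ, ‖𝓕 g w‖ ≤ B * (1 + |w + ξ|) ^ (-(2:ℝ)) := by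
    intro w
    refine (hFgb w).trans (mul_le_mul_of_nonneg_left ?_ hB0.le)
    exact Real.rpow_le_rpow_of_exponent_le (hbase _) (by linarith)
  -- BigO hypotheses for Poisson summation
  have hO : g =O[Filter.cocompact ℝ] (fun x : ℝ => |x| ^ (-(2:ℝ))) := by
    have h1 : (fun y => ‖g y‖) = fun y => ‖φ y‖ := funext hgn
    rw [← Asymptotics.isBigO_norm_left, h1, Asymptotics.isBigO_norm_left]
    exact φ.isBigO_cocompact_rpow (-2)
  have hFO : (𝓕 g) =O[Filter.cocompact ℝ] (fun x : ℝ => |x| ^ (-(2:ℝ))) := by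
    have key : ∀ w : ℝ, 2 * |ξ| + 2 ≤ |w| → ‖𝓕 g w‖ ≤ B * 4 * ‖|w| ^ (-(2:ℝ))‖ := by
      intro w hw
      have hw0 : 0 < |w| := by have := abs_nonneg ξ; linarith
      have h1 : |w| / 2 ≤ 1 + |w + ξ| := by
        have : |w| ≤ |w + ξ| + |ξ| := by
          calc |w| = |(w + ξ) + (-ξ)| := by ring_nf
          _ ≤ |w + ξ| + |(-ξ)| := abs_add_le _ _
          _ = |w + ξ| + |ξ| := by rw [abs_neg]
        linarith
      have h2 := rpow_neg_two_half hw0 h1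
      have h3 := (hFgb2 w).trans (mul_le_mul_of_nonneg_left h2 hB0.le)
      rw [Real.norm_eq_abs, _root_.abs_of_nonneg (by positivity : (0:ℝ) ≤ |w| ^ (-(2:ℝ)))]
      linarith
    rw [cocompact_eq_atBot_atTop, Asymptotics.isBigO_sup]
    constructor
    · refine Asymptotics.IsBigO.of_bound (B * 4) ?_
      filter_upwards [Filter.eventually_le_atBot (-(2 * |ξ| + 2))] with w hw
      exact key w (by have := neg_le_abs w; linarith)
    · refine Asymptotics.IsBigO.of_bound (B * 4) ?_
      filter_upwards [Filter.eventually_ge_atTop (2 * |ξ| + 2)] with w hw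
      exact key w (hw.trans (le_abs_self w))
  -- Poisson summation
  have hp : ∀ x : ℝ, ∑' n : ℤ, g (x + n) = ∑' k : ℤ, 𝓕 g k * fourier k (x : UnitAddCircle) :=
    Real.tsum_eq_tsum_fourier_of_rpow_decay hgc one_lt_two hO hFO
  -- m₀ is a.e. supported in [0,1)
  have hae : ∀ᵐ y ∂m₀, y ∈ Set.Ico (0:ℝ) 1 := by
    rw [MeasureTheory.ae_iff]
    simpa [Set.compl_def] using hsupp
  -- bound for translated g
  have hgbn : ∀ n : ℤ, ∀ᵐ y ∂m₀, ‖g (y + (n:ℝ))‖ ≤ 4 * D * (1 + |(n:ℝ)|) ^ (-(2:ℝ)) := by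
    intro n
    filter_upwards [hae] with y hy
    rw [hgn]
    have h1 : (1 + |(n:ℝ)|) / 2 ≤ 1 + |y + (n:ℝ)| := by
      have h2 : |(n:ℝ)| ≤ |y + (n:ℝ)| + |y| := by
        calc |(n:ℝ)| = |(y + (n:ℝ)) + (-y)| := by ring_nf
        _ ≤ |y + (n:ℝ)| + |(-y)| := abs_add_le _ _
        _ = |y + (n:ℝ)| + |y| := by rw [abs_neg]
      have h3 : |y| ≤ 1 := by
        rw [_root_.abs_of_nonneg hy.1]; exact hy.2.le
      linarith [abs_nonneg (y + (n:ℝ))]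
    have h4 := rpow_neg_two_half (by positivity : (0:ℝ) < 1 + |(n:ℝ)|) h1
    calc ‖φ (y + (n:ℝ))‖ ≤ D * (1 + |y + (n:ℝ)|) ^ (-(2:ℝ)) := hφb _
    _ ≤ D * (4 * (1 + |(n:ℝ)|) ^ (-(2:ℝ))) := mul_le_mul_of_nonneg_left h4 hD0.le
    _ = 4 * D * (1 + |(n:ℝ)|) ^ (-(2:ℝ)) := by ring
  -- finiteness of the sum of lintegrals
  have hfin : (∑' n : ℤ, ∫⁻ y, ‖g (y + (n:ℝ))‖₊ ∂m₀) ≠ ⊤ := by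
    refine tsum_lintegral_ne_top hgbn ?_ (fun n => by positivity)
    simpa [mul_assoc] using summable_base.mul_left (4 * D)
  -- integrability over mper
  have hintper : Integrable g mper := by
    refine ⟨hgc.aestronglyMeasurable, ?_⟩
    show (∫⁻ x, ‖g x‖₊ ∂mper) < ⊤
    rw [hper, MeasureTheory.lintegral_sum_measure]
    have heach : ∀ n : ℤ, ∫⁻ x, ‖g x‖₊ ∂(Measure.map (fun y => y + (n:ℝ)) m₀)
        = ∫⁻ y, ‖g (y + (n:ℝ))‖₊ ∂m₀ := by
      intro n
      rw [lintegral_map (by fun_prop) (by fun_prop)]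
    rw [tsum_congr heach]
    exact hfin.lt_top
  -- Step A : integral over mper as a sum
  have hA : ∫ x, g x ∂mper = ∑' n : ℤ, ∫ y, g (y + (n:ℝ)) ∂m₀ := by
    rw [hper, MeasureTheory.integral_sum_measure (hper ▸ hintper)]
    refine tsum_congr fun n => ?_
    exact (MeasurableEquiv.addRight (n:ℝ)).measurableEmbedding.integral_map g
  -- swap 1
  have hswap1 : (∑' n : ℤ, ∫ y, g (y + (n:ℝ)) ∂m₀) = ∫ y, (∑' n : ℤ, g (y + (n:ℝ))) ∂m₀ := by
    refine (MeasureTheory.integral_tsum (fun n => ?_) hfin).symm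
    exact (hgc.comp (by fun_prop)).aestronglyMeasurable
  -- Poisson under the integral
  have hpois : (∫ y, (∑' n : ℤ, g (y + (n:ℝ))) ∂m₀)
      = ∫ y, (∑' k : ℤ, 𝓕 g k * fourier k ((y : ℝ) : UnitAddCircle)) ∂m₀ :=
    integral_congr_ae (Filter.Eventually.of_forall fun y => hp y)
  -- swap 2
  have hFOb : ∀ k : ℤ, ∀ᵐ y ∂m₀, ‖𝓕 g (k:ℝ) * fourier k ((y : ℝ) : UnitAddCircle)‖
      ≤ B * (1 + |(k:ℝ) + ξ|) ^ (-(2:ℝ)) := by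
    intro k
    refine Filter.Eventually.of_forall fun y => ?_
    rw [norm_mul, norm_fourier_one, mul_one]
    exact hFgb2 k
  have hfin2 : (∑' k : ℤ, ∫⁻ y, ‖𝓕 g (k:ℝ) * fourier k ((y : ℝ) : UnitAddCircle)‖₊ ∂m₀) ≠ ⊤ :=
    tsum_lintegral_ne_top hFOb ((summable_shift ξ).mul_left B) (fun k => by positivity)
  have hswap2 : (∫ y, (∑' k : ℤ, 𝓕 g k * fourier k ((y : ℝ) : UnitAddCircle)) ∂m₀)
      = ∑' k : ℤ, 𝓕 g k * ∫ y, (fourier k ((y : ℝ) : UnitAddCircle) : ℂ) ∂m₀ := by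
    rw [MeasureTheory.integral_tsum (fun k => ?_) hfin2]
    · exact tsum_congr fun k => MeasureTheory.integral_const_mul _ _
    · exact (continuous_const.mul
        ((fourier k).continuous.comp continuous_quotient_mk')).aestronglyMeasurable
  -- bound on the measure's Fourier coefficients
  have hJ : ∀ k : ℤ, ‖∫ y, (fourier k ((y : ℝ) : UnitAddCircle) : ℂ) ∂m₀‖ ≤ C * (1 + |(k:ℝ)|) ^ (-a) := by
    intro k
    have h := hdecay (-k)
    have he : ∀ y : ℝ, (fourier k ((y : ℝ) : UnitAddCircle) : ℂ)
        = Complex.exp (-(2 * (π:ℂ) * Complex.I * ((-k:ℤ):ℂ) * (y:ℂ))) := by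
      intro y
      rw [fourier_coe_apply]
      congr 1
      push_cast
      ring
    simp_rw [he]
    convert h using 3
    push_cast
    rw [abs_neg]
  -- termwise bound
  have hterm : ∀ k : ℤ, ‖𝓕 g (k:ℝ) * ∫ y, (fourier k ((y : ℝ) : UnitAddCircle) : ℂ) ∂m₀‖
      ≤ (B * C * (1 + |ξ|) ^ (-a)) * (1 + |(k:ℝ) + ξ|) ^ (-(2:ℝ)) := by
    intro k
    rw [norm_mul]
    have h1 : (1 + |(k:ℝ) + ξ|) ^ (-(N:ℝ))
        ≤ (1 + |(k:ℝ) + ξ|) ^ (-a) * (1 + |(k:ℝ) + ξ|) ^ (-(2:ℝ)) := by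
      rw [← Real.rpow_add (by positivity)]
      exact Real.rpow_le_rpow_of_exponent_le (hbase _) (by linarith)
    calc ‖𝓕 g (k:ℝ)‖ * ‖∫ y, (fourier k ((y : ℝ) : UnitAddCircle) : ℂ) ∂m₀‖
        ≤ (B * ((1 + |(k:ℝ) + ξ|) ^ (-a) * (1 + |(k:ℝ) + ξ|) ^ (-(2:ℝ))))
          * (C * (1 + |(k:ℝ)|) ^ (-a)) := by
          refine mul_le_mul ((hFgb k).trans (mul_le_mul_of_nonneg_left h1 hB0.le)) (hJ k)
            (norm_nonneg _) (by positivity)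
    _ = (B * C * (1 + |(k:ℝ) + ξ|) ^ (-(2:ℝ)))
          * ((1 + |(k:ℝ) + ξ|) ^ (-a) * (1 + |(k:ℝ)|) ^ (-a)) := by ring
    _ ≤ (B * C * (1 + |(k:ℝ) + ξ|) ^ (-(2:ℝ))) * (1 + |ξ|) ^ (-a) := by
          exact mul_le_mul_of_nonneg_left (peetre_rpow ha ξ k) (by positivity)
    _ = (B * C * (1 + |ξ|) ^ (-a)) * (1 + |(k:ℝ) + ξ|) ^ (-(2:ℝ)) := by ring
  have hsum_bound : Summable (fun k : ℤ =>
      (B * C * (1 + |ξ|) ^ (-a)) * (1 + |(k:ℝ) + ξ|) ^ (-(2:ℝ))) :=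
    (summable_shift ξ).mul_left _
  have hsumnorm : Summable (fun k : ℤ =>
      ‖𝓕 g (k:ℝ) * ∫ y, (fourier k ((y : ℝ) : UnitAddCircle) : ℂ) ∂m₀‖) :=
    Summable.of_nonneg_of_le (fun k => norm_nonneg _) hterm hsum_bound
  -- conclude
  have hrw : (∫ x, Complex.exp (-(2 * (π : ℂ) * Complex.I * (x : ℂ) * (ξ : ℂ))) * φ x ∂mper)
      = ∑' k : ℤ, 𝓕 g k * ∫ y, (fourier k ((y : ℝ) : UnitAddCircle) : ℂ) ∂m₀ := by
    rw [show (∫ x, Complex.exp (-(2 * (π : ℂ) * Complex.I * (x : ℂ) * (ξ : ℂ))) * φ x ∂mper)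
      = ∫ x, g x ∂mper from rfl, hA, hswap1, hpois, hswap2]
  rw [hrw]
  calc ‖∑' k : ℤ, 𝓕 g (k:ℝ) * ∫ y, (fourier k ((y : ℝ) : UnitAddCircle) : ℂ) ∂m₀‖
      ≤ ∑' k : ℤ, ‖𝓕 g (k:ℝ) * ∫ y, (fourier k ((y : ℝ) : UnitAddCircle) : ℂ) ∂m₀‖ :=
        norm_tsum_le_tsum_norm hsumnorm
  _ ≤ ∑' k : ℤ, (B * C * (1 + |ξ|) ^ (-a)) * (1 + |(k:ℝ) + ξ|) ^ (-(2:ℝ)) :=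
        Summable.tsum_le_tsum hterm hsumnorm hsum_bound
  _ = (B * C * (1 + |ξ|) ^ (-a)) * ∑' k : ℤ, (1 + |(k:ℝ) + ξ|) ^ (-(2:ℝ)) := tsum_mul_left
  _ ≤ (B * C * (1 + |ξ|) ^ (-a)) * (4 * S₀) :=
        mul_le_mul_of_nonneg_left (tsum_shift_le ξ) (by positivity)
  _ = B * C * (4 * S₀) * (1 + |ξ|) ^ (-a) := by ring
end
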